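/- Let F : C → D be an exact functor of triangulated categories and w a relative weight structure on C with respect to F. Given M, M' ∈ C, integers l < m, fixed weight decomposition triangles w_{≥m+1}M → M → w_{≤m}M and w_{≥l+1}M' → M' → w_{≤l}M', and any morphism g : M → M', there exist morphisms c : w_{≥m+1}M → w_{≥l+1}M' and d : w_{≤m}M → w_{≤l}M' making the evident diagram commute; moreover F(d) is uniquely determined by g and the two right-hand triangle maps, and F(c) by g and the two left-hand triangle maps. -/

import Mathlib

open CategoryTheory Category Limits Pretriangulated

/-- `X` is a retract of `Y`. -/
def IsRetract {C : Type*} [Category C] (X Y : C) : Prop :=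
  ∃ (i : X ⟶ Y) (r : Y ⟶ X), i ≫ r = 𝟙 X

variable {C : Type*} [Category C] [HasZeroObject C] [HasShift C ℤ]
  [Preadditive C] [∀ n : ℤ, (shiftFunctor C n).Additive] [Pretriangulated C]
variable {D : Type*} [Category D] [HasZeroObject D] [HasShift D ℤ]
  [Preadditive D] [∀ n : ℤ, (shiftFunctor D n).Additive] [Pretriangulated D]

/-- A relative weight structure on `C` with respect to an exact functor `F : C ⥤ D`
(an `F`-weight structure, Bondarko): extension-stable Karoubi-closed classes
`le = C^{w≤0}`, `ge = C^{w≥0}` with shift semi-invariance, weak orthogonality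
`C^{w≥0} ⊥ C^{w≤0}[2]`, `F`-orthogonality (`F` kills morphisms from `C^{w≥0}` to
`C^{w≤0}[1]`), and weight decompositions. -/
structure IsRelWeightStructure (F : C ⥤ D) (le ge : Set C) : Prop where
  le_retract : ∀ ⦃X Y : C⦄, Y ∈ le → IsRetract X Y → X ∈ le
  ge_retract : ∀ ⦃X Y : C⦄, Y ∈ ge → IsRetract X Y → X ∈ ge
  le_ext : ∀ T ∈ distTriang C, T.obj₁ ∈ le → T.obj₃ ∈ le → T.obj₂ ∈ le
  ge_ext : ∀ T ∈ distTriang C, T.obj₁ ∈ ge → T.obj₃ ∈ ge → T.obj₂ ∈ ge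
  le_shift : ∀ ⦃X : C⦄, X ∈ le → X⟦(1 : ℤ)⟧ ∈ le
  ge_shift : ∀ ⦃X : C⦄, X ∈ ge → X⟦(-1 : ℤ)⟧ ∈ ge
  weak_orth : ∀ ⦃X Y : C⦄, X ∈ ge → Y ∈ le → ∀ f : X ⟶ Y⟦(2 : ℤ)⟧, f = 0
  F_orth : ∀ ⦃X Y : C⦄, X ∈ ge → Y ∈ le → ∀ f : X ⟶ Y⟦(1 : ℤ)⟧, F.map f = 0
  decomp : ∀ M : C, ∃ (A B : C) (_ : A ∈ le) (_ : B ∈ ge)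
    (f : M ⟶ A) (g : A ⟶ B) (h : B ⟶ M⟦(1 : ℤ)⟧), Triangle.mk f g h ∈ distTriang C

private lemma mem_of_iso_le {F : C ⥤ D} {le ge : Set C} (w : IsRelWeightStructure F le ge)
    {X Y : C} (e : X ≅ Y) (hY : Y ∈ le) : X ∈ le :=
  w.le_retract hY ⟨e.hom, e.inv, e.hom_inv_id⟩

private lemma mem_of_iso_ge {F : C ⥤ D} {le ge : Set C} (w : IsRelWeightStructure F le ge)
    {X Y : C} (e : X ≅ Y) (hY : Y ∈ ge) : X ∈ ge :=
  w.ge_retract hY ⟨e.hom, e.inv, e.hom_inv_id⟩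

private lemma le_shift_nonneg {F : C ⥤ D} {le ge : Set C} (w : IsRelWeightStructure F le ge)
    (n : ℤ) (hn : 0 ≤ n) {X : C} (hX : X ∈ le) : X⟦n⟧ ∈ le := by
  obtain ⟨k, rfl⟩ := Int.eq_ofNat_of_zero_le hn
  induction k with
  | zero => exact mem_of_iso_le w ((shiftFunctorZero C ℤ).app X) hX
  | succ k ih =>
    exact mem_of_iso_le w
      ((shiftFunctorAdd' C (k : ℤ) 1 ((k + 1 : ℕ) : ℤ) (by push_cast; ring)).app X)
      (w.le_shift (ih (by positivity)))

private lemma le_shift_mono {F : C ⥤ D} {le ge : Set C} (w : IsRelWeightStructure F le ge)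
    {Y : C} {q p : ℤ} (h : q ≤ p) (hY : Y⟦q⟧ ∈ le) : Y⟦p⟧ ∈ le :=
  mem_of_iso_le w ((shiftFunctorAdd' C q (p - q) p (by omega)).app Y)
    (le_shift_nonneg w _ (by omega) hY)

private lemma orthW {F : C ⥤ D} {le ge : Set C} (w : IsRelWeightStructure F le ge)
    {X Y : C} {p q : ℤ} (h : q + 2 ≤ p) (hX : X⟦p⟧ ∈ ge) (hY : Y⟦q⟧ ∈ le) (f : X ⟶ Y) :
    f = 0 := by
  have hZ : Y⟦p - 2⟧ ∈ le := le_shift_mono w (by omega) hY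
  set e := (shiftFunctorAdd' C (p - 2) 2 p (by omega)).app Y with he
  have h1 : f⟦p⟧' ≫ e.hom = 0 := w.weak_orth hX hZ _
  have h2 : f⟦p⟧' = 0 := by
    have : f⟦p⟧' = (f⟦p⟧' ≫ e.hom) ≫ e.inv := by simp
    rw [this, h1, zero_comp]
  exact (shiftFunctor C p).map_injective (by rw [h2, Functor.map_zero])

private lemma orthF {F : C ⥤ D} [F.CommShift ℤ] {le ge : Set C}
    (w : IsRelWeightStructure F le ge)
    {X Y : C} {p q : ℤ} (h : q + 1 ≤ p) (hX : X⟦p⟧ ∈ ge) (hY : Y⟦q⟧ ∈ le) (f : X ⟶ Y) :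
    F.map f = 0 := by
  have hZ : Y⟦p - 1⟧ ∈ le := le_shift_mono w (by omega) hY
  set e := (shiftFunctorAdd' C (p - 1) 1 p (by omega)).app Y with he
  have h1 : F.map (f⟦p⟧' ≫ e.hom) = 0 := w.F_orth hX hZ _
  have h2 : F.map (f⟦p⟧') = 0 := by
    have : f⟦p⟧' = (f⟦p⟧' ≫ e.hom) ≫ e.inv := by simp
    rw [this, F.map_comp, h1, zero_comp]
  have h3 : (shiftFunctor D p).map (F.map f) = 0 := by
    have hn := (F.commShiftIso p).hom.naturality f
    dsimp at hn
    rw [h2, zero_comp] at hn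
    rw [← cancel_epi ((F.commShiftIso p).hom.app X), comp_zero]
    exact hn.symm
  exact (shiftFunctor D p).map_injective (by rw [h3, Functor.map_zero])


/-- Weak functoriality of weight decompositions for a relative weight structure: given
`g : M ⟶ M'`, `l < m`, and weight decomposition triangles
`w_{≥m+1}M → M → w_{≤m}M` and `w_{≥l+1}M' → M' → w_{≤l}M'`
(where `X ∈ C^{w≤m}` iff `X⟦m⟧ ∈ C^{w≤0}`, and `X ∈ C^{w≥m+1}` iff
`X⟦m+1⟧ ∈ C^{w≥0}`), there exist `c`, `d` making the evident diagram commute; moreover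
`F(d)` is uniquely determined by `g` and the given triangles, and likewise `F(c)`. -/
theorem relWeightStructure_weak_functoriality_of_decompositions
    {F : C ⥤ D} [F.CommShift ℤ] [F.IsTriangulated] {le ge : Set C}
    (w : IsRelWeightStructure F le ge)
    (M M' : C) (l m : ℤ) (hlm : l < m)
    (Xg Xl Xg' Xl' : C)
    (hXg : (shiftFunctor C (m + 1)).obj Xg ∈ ge)
    (hXl : (shiftFunctor C m).obj Xl ∈ le)
    (hXg' : (shiftFunctor C (l + 1)).obj Xg' ∈ ge)
    (hXl' : (shiftFunctor C l).obj Xl' ∈ le)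
    (b : Xg ⟶ M) (a : M ⟶ Xl) (δ : Xl ⟶ Xg⟦(1 : ℤ)⟧)
    (hT : Triangle.mk b a δ ∈ distTriang C)
    (b' : Xg' ⟶ M') (a' : M' ⟶ Xl') (δ' : Xl' ⟶ Xg'⟦(1 : ℤ)⟧)
    (hT' : Triangle.mk b' a' δ' ∈ distTriang C)
    (g : M ⟶ M') :
    (∃ (c : Xg ⟶ Xg') (d : Xl ⟶ Xl'), c ≫ b' = b ≫ g ∧ a ≫ d = g ≫ a') ∧
    (∀ d₁ d₂ : Xl ⟶ Xl', a ≫ d₁ = g ≫ a' → a ≫ d₂ = g ≫ a' → F.map d₁ = F.map d₂) ∧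
    (∀ c₁ c₂ : Xg ⟶ Xg', c₁ ≫ b' = b ≫ g → c₂ ≫ b' = b ≫ g → F.map c₁ = F.map c₂) := by
  have hzero : ∀ f : Xg ⟶ Xl', f = 0 :=
    fun f => orthW w (p := m + 1) (q := l) (by omega) hXg hXl' f
  obtain ⟨c, hc⟩ := Triangle.coyoneda_exact₂ _ hT' (b ≫ g)
    (by exact (Category.assoc b g a').trans (hzero _))
  obtain ⟨d, hd, -⟩ := complete_distinguished_triangle_morphism _ _ hT hT' c g hc
  refine ⟨⟨c, d, hc.symm, hd⟩, ?_, ?_⟩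
  · intro d₁ d₂ h₁ h₂
    have h0 : a ≫ (d₁ - d₂) = 0 := by rw [Preadditive.comp_sub, h₁, h₂, sub_self]
    obtain ⟨e, he⟩ := Triangle.yoneda_exact₃ _ hT (d₁ - d₂) h0
    have hXg1 : (Xg⟦(1 : ℤ)⟧)⟦m⟧ ∈ ge :=
      mem_of_iso_ge w ((shiftFunctorAdd' C 1 m (m + 1) (by omega)).app Xg).symm hXg
    have hFe : F.map e = 0 := orthF w (p := m) (q := l) (by omega) hXg1 hXl' e
    have hz : F.map (d₁ - d₂) = 0 := by rw [he]; exact (F.map_comp δ e).trans (by erw [hFe, comp_zero])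
    rw [← sub_eq_zero, ← F.map_sub]; exact hz
  · intro c₁ c₂ h₁ h₂
    have h0 : (c₁ - c₂) ≫ b' = 0 := by rw [Preadditive.sub_comp, h₁, h₂, sub_self]
    obtain ⟨e, he⟩ := Triangle.coyoneda_exact₂ _ (inv_rot_of_distTriang _ hT') (c₁ - c₂)
      (by exact h0)
    have hle : (Xl'⟦(-1 : ℤ)⟧)⟦l + 1⟧ ∈ le :=
      mem_of_iso_le w ((shiftFunctorAdd' C (-1) (l + 1) l (by omega)).app Xl').symm hXl'
    have hFe : F.map e = 0 := orthF w (p := m + 1) (q := l + 1) (by omega) hXg hle e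
    have hz : F.map (c₁ - c₂) = 0 := by rw [he]; exact (F.map_comp e _).trans (by erw [hFe, zero_comp])
    rw [← sub_eq_zero, ← F.map_sub]; exact hz
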